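/- Fix integers n, k, t with the construction: starting from pairs of letters over an alphabet of l letters encoded as single letters over an alphabet of l² letters, the maximal size β(t, l², n) of an n-light class of word-cycles of length t over l² letters is at least β(2t, l, n), the maximal size of an n-light class of word-cycles of length 2t over l letters. -/

import Mathlib

/-- `u` repeated `d` times. -/
def wpow {α : Type*} (u : List α) (d : ℕ) : List α := (List.replicate d u).flatten

/-- Two words are comparable if neither is a prefix of the other. -/
def WComparable {α : Type*} (u v : List α) : Prop := ¬ u <+: v ∧ ¬ v <+: u

/-- An `n`-light class of `N` word-cycles of length `t` over an `l`-letter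
alphabet: a numbered family of primitive words of length `t`, pairwise strongly
comparable (every cyclic shift of one is comparable with every cyclic shift of
another), such that the partial order `u ≺ v ↔` (`u` lexicographically smaller
than `v` and the word-cycle of `u` has smaller index) on the words occurring in
the word-cycles has no antichain of size `n`. -/
def IsNLightClass (t l n N : ℕ) : Prop :=
  ∃ C : Fin N → List (Fin l),
    (∀ i, (C i).length = t) ∧
    (∀ i, ¬ ∃ (v : List (Fin l)) (k : ℕ), 1 < k ∧ C i = wpow v k) ∧
    (∀ i j : Fin N, i ≠ j → ∀ r s : ℕ, WComparable ((C i).rotate r) ((C j).rotate s)) ∧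
    ¬ ∃ A : Finset (Fin N × Fin t), A.card = n ∧
        ∀ a ∈ A, ∀ b ∈ A, a ≠ b →
          ¬ (List.Lex (· < ·) ((C a.1).rotate a.2) ((C b.1).rotate b.2) ∧ a.1 < b.1) ∧
          ¬ (List.Lex (· < ·) ((C b.1).rotate b.2) ((C a.1).rotate a.2) ∧ b.1 < a.1)

/-- `β(t, l, n)`: the maximal number of word-cycles in an `n`-light class of
word-cycles of length `t` over an `l`-letter alphabet. -/
noncomputable def beta (t l n : ℕ) : ℕ := sSup {N | IsNLightClass t l n N}

/-! ### Auxiliary machinery for the encoding -/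

/-- Encode a pair of letters over `Fin l` as a single letter over `Fin (l^2)`. -/
def pairF {l : ℕ} (a b : Fin l) : Fin (l ^ 2) :=
  ⟨a.val * l + b.val, by
    have ha := a.isLt; have hb := b.isLt
    have h1 : a.val * l + b.val < (a.val + 1) * l := by
      rw [add_mul, one_mul]; omega
    have h2 : (a.val + 1) * l ≤ l * l := by
      exact Nat.mul_le_mul_right l ha
    calc a.val * l + b.val < (a.val + 1) * l := h1
      _ ≤ l * l := h2
      _ = l ^ 2 := (sq l).symm⟩

theorem pairF_inj {l : ℕ} {a b c d : Fin l} (h : pairF a b = pairF c d) :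
    a = c ∧ b = d := by
  have hv : a.val * l + b.val = c.val * l + d.val := congrArg Fin.val h
  have hb := b.isLt; have hd := d.isLt
  have e1 : (a.val * l + b.val) % l = b.val := by
    rw [Nat.add_comm, Nat.add_mul_mod_self_right, Nat.mod_eq_of_lt hb]
  have e2 : (c.val * l + d.val) % l = d.val := by
    rw [Nat.add_comm, Nat.add_mul_mod_self_right, Nat.mod_eq_of_lt hd]
  have h1 : b.val = d.val := by rw [← e1, ← e2, hv]
  have h2 : a.val * l = c.val * l := by omega
  have h3 : a.val = c.val := Nat.eq_of_mul_eq_mul_right (Fin.pos b) h2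
  exact ⟨Fin.ext h3, Fin.ext h1⟩

theorem pairF_lt_iff {l : ℕ} {a b c d : Fin l} :
    pairF a b < pairF c d ↔ a < c ∨ (a = c ∧ b < d) := by
  have hb := b.isLt; have hd := d.isLt
  constructor
  · intro h
    have hv : a.val * l + b.val < c.val * l + d.val := h
    rcases lt_trichotomy a.val c.val with hac | hac | hac
    · exact Or.inl hac
    · exact Or.inr ⟨Fin.ext hac, by rw [hac] at hv; omega⟩
    · exfalso
      have : c.val * l + d.val < (c.val + 1) * l := by rw [add_mul, one_mul]; omega
      have h2 : (c.val + 1) * l ≤ a.val * l := Nat.mul_le_mul_right l hac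
      omega
  · rintro (h | ⟨rfl, h⟩)
    · show a.val * l + b.val < c.val * l + d.val
      have h1 : a.val * l + b.val < (a.val + 1) * l := by rw [add_mul, one_mul]; omega
      have h2 : (a.val + 1) * l ≤ c.val * l := Nat.mul_le_mul_right l h
      omega
    · show a.val * l + b.val < a.val * l + d.val
      omega

/-- Encode a word of even length over `Fin l` as a word over `Fin (l^2)` by
pairing adjacent positions. -/
def enc {l : ℕ} : List (Fin l) → List (Fin (l ^ 2))
  | [] => []
  | [_] => []
  | a :: b :: rest => pairF a b :: enc rest

theorem enc_length {l : ℕ} : ∀ w : List (Fin l), (enc w).length = w.length / 2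
  | [] => by simp [enc]
  | [_] => by simp [enc]
  | a :: b :: rest => by
      show (enc rest).length + 1 = (rest.length + 2) / 2
      rw [enc_length rest]; omega

theorem enc_append {l : ℕ} :
    ∀ (u : List (Fin l)), Even u.length → ∀ v, enc (u ++ v) = enc u ++ enc v
  | [], _, v => rfl
  | [_], h, v => by simp [Nat.even_iff] at h
  | a :: b :: u, h, v => by
      have hu : Even u.length := by
        rcases h with ⟨m, hm⟩
        exact ⟨m - 1, by simp at hm; omega⟩
      show pairF a b :: enc (u ++ v) = pairF a b :: (enc u ++ enc v)
      rw [enc_append u hu v]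

theorem enc_inj {l : ℕ} :
    ∀ u v : List (Fin l), Even u.length → Even v.length → enc u = enc v → u = v
  | [], [], _, _, _ => rfl
  | [], [_], _, hv, _ => by simp [Nat.even_iff] at hv
  | [_], _, hu, _, _ => by simp [Nat.even_iff] at hu
  | [], a :: b :: v, _, _, h => by simp [enc] at h
  | a :: b :: u, [], _, _, h => by simp [enc] at h
  | a :: b :: u, [_], _, hv, _ => by simp [Nat.even_iff] at hv
  | a :: b :: u, c :: d :: v, hu, hv, h => by
      have h1 : pairF a b = pairF c d ∧ enc u = enc v := by
        simpa [enc] using h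
      obtain ⟨rfl, rfl⟩ := pairF_inj h1.1
      have hu' : Even u.length := by
        rcases hu with ⟨m, hm⟩; exact ⟨m - 1, by simp at hm; omega⟩
      have hv' : Even v.length := by
        rcases hv with ⟨m, hm⟩; exact ⟨m - 1, by simp at hm; omega⟩
      rw [enc_inj u v hu' hv' h1.2]

theorem enc_take {l : ℕ} :
    ∀ (w : List (Fin l)) (r : ℕ), enc (w.take (2 * r)) = (enc w).take r
  | w, 0 => by simp [enc]
  | [], r + 1 => by simp [enc]
  | [a], r + 1 => by
      have : 2 * (r + 1) = 1 + (2 * r + 1) := by ring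
      rw [List.take_of_length_le (l := [a]) (by simp; omega)]; simp [enc]
  | a :: b :: w, r + 1 => by
      have h2 : 2 * (r + 1) = (2 * r + 1) + 1 := by ring
      rw [h2]
      show enc (a :: b :: w.take (2 * r)) = pairF a b :: (enc w).take r
      show pairF a b :: enc (w.take (2 * r)) = pairF a b :: (enc w).take r
      rw [enc_take w r]

theorem enc_drop {l : ℕ} :
    ∀ (w : List (Fin l)) (r : ℕ), enc (w.drop (2 * r)) = (enc w).drop r
  | w, 0 => by simp
  | [], r + 1 => by simp [enc]
  | [a], r + 1 => by
      have : 2 * (r + 1) = 1 + (2 * r + 1) := by ring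
      rw [List.drop_of_length_le (l := [a]) (by simp; omega)]; simp [enc]
  | a :: b :: w, r + 1 => by
      have h2 : 2 * (r + 1) = (2 * r + 1) + 1 := by ring
      rw [h2]
      show enc (w.drop (2 * r)) = (enc w).drop r
      exact enc_drop w r

theorem enc_rotate {l : ℕ} (w : List (Fin l)) (hw : Even w.length) (r : ℕ)
    (hr : r ≤ (enc w).length) : (enc w).rotate r = enc (w.rotate (2 * r)) := by
  have hlen : (enc w).length = w.length / 2 := enc_length w
  have h2r : 2 * r ≤ w.length := by omega
  rw [List.rotate_eq_drop_append_take hr, List.rotate_eq_drop_append_take h2r]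
  have hdr : Even (w.drop (2 * r)).length := by
    rw [List.length_drop]
    rcases hw with ⟨m, hm⟩
    exact ⟨m - r, by omega⟩
  rw [enc_append _ hdr, enc_take, enc_drop]

theorem wpow_length {α : Type*} (u : List α) (d : ℕ) :
    (wpow u d).length = d * u.length := by
  simp [wpow]

theorem wpow_succ {α : Type*} (u : List α) (d : ℕ) :
    wpow u (d + 1) = u ++ wpow u d := by
  simp [wpow, List.replicate_succ]

theorem enc_wpow {l : ℕ} (u : List (Fin l)) (hu : Even u.length) :
    ∀ d, enc (wpow u d) = wpow (enc u) d
  | 0 => by simp [wpow, enc]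
  | d + 1 => by
      rw [wpow_succ, wpow_succ, enc_append u hu, enc_wpow u hu d]

theorem lex_cons_cons_iff {β : Type*} [LinearOrder β] {x y : β} {xs ys : List β} :
    List.Lex (· < ·) (x :: xs) (y :: ys) ↔ x < y ∨ (x = y ∧ List.Lex (· < ·) xs ys) := by
  constructor
  · intro h
    cases h with
    | cons h => exact Or.inr ⟨rfl, h⟩
    | rel h => exact Or.inl h
  · rintro (h | ⟨rfl, h⟩)
    · exact List.Lex.rel h
    · exact List.Lex.cons h

theorem enc_lex {l : ℕ} :
    ∀ u v : List (Fin l), u.length = v.length → Even u.length →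
      (List.Lex (· < ·) (enc u) (enc v) ↔ List.Lex (· < ·) u v)
  | [], [], _, _ => by
      constructor <;> intro h <;> exact absurd h List.not_lex_nil
  | [], _ :: _, h, _ => by simp at h
  | _ :: _, [], h, _ => by simp at h
  | [_], _, _, hu => by simp [Nat.even_iff] at hu
  | _ :: _ :: _, [_], h, _ => by
      simp at h
  | a :: b :: u, c :: d :: v, h, hu => by
      have hlen : u.length = v.length := by simp at h; omega
      have hu' : Even u.length := by
        rcases hu with ⟨m, hm⟩; exact ⟨m - 1, by simp at hm; omega⟩
      show List.Lex (· < ·) (pairF a b :: enc u) (pairF c d :: enc v) ↔ _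
      rw [lex_cons_cons_iff, lex_cons_cons_iff, lex_cons_cons_iff,
        pairF_lt_iff, enc_lex u v hlen hu']
      constructor
      · rintro (⟨h1 | ⟨rfl, h1⟩⟩ | ⟨hpe, h2⟩)
        · exact Or.inl h1
        · exact Or.inr ⟨rfl, Or.inl h1⟩
        · obtain ⟨rfl, rfl⟩ := pairF_inj hpe
          exact Or.inr ⟨rfl, Or.inr ⟨rfl, h2⟩⟩
      · rintro (h1 | ⟨rfl, h1 | ⟨rfl, h2⟩⟩)
        · exact Or.inl (Or.inl h1)
        · exact Or.inl (Or.inr ⟨rfl, h1⟩)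
        · exact Or.inr ⟨rfl, h2⟩

theorem wcomparable_of_ne {α : Type*} {u v : List α} (h : u.length = v.length)
    (hne : u ≠ v) : WComparable u v :=
  ⟨fun hp => hne (hp.eq_of_length h),
   fun hp => hne (hp.eq_of_length h.symm).symm⟩

/-- The main encoding step: an `n`-light class of `N` word-cycles of length
`2t` over `l` letters yields one of length `t` over `l^2` letters. -/
theorem isNLightClass_encode (t l n N : ℕ) (h : IsNLightClass (2 * t) l n N) :
    IsNLightClass t (l ^ 2) n N := by
  obtain ⟨C, hlen, hprim, hcomp, hanti⟩ := h
  have hE : ∀ i, Even (C i).length := fun i => by rw [hlen]; exact even_two_mul t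
  have hlenE : ∀ i, (enc (C i)).length = t := fun i => by
    rw [enc_length, hlen]; omega
  have hrotE : ∀ (i : Fin N) (r : ℕ), r ≤ t →
      (enc (C i)).rotate r = enc ((C i).rotate (2 * r)) := fun i r hr =>
    enc_rotate (C i) (hE i) r (by rw [hlenE]; exact hr)
  refine ⟨fun i => enc (C i), hlenE, ?_, ?_, ?_⟩
  · -- primitivity
    rintro i ⟨v, k, hk, heq⟩
    replace heq : enc (C i) = wpow v k := heq
    apply hprim i
    refine ⟨(C i).take (2 * v.length), k, hk, ?_⟩
    have hvt : v.length ≤ t := by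
      have := congrArg List.length heq
      rw [hlenE, wpow_length] at this
      nlinarith
    have htake_even : Even ((C i).take (2 * v.length)).length := by
      rw [List.length_take, hlen]
      exact ⟨min v.length t, by omega⟩
    have hencu : enc ((C i).take (2 * v.length)) = v := by
      rw [enc_take, heq]
      have : wpow v k = v ++ wpow v (k - 1) := by
        have hk1 : k = (k - 1) + 1 := by omega
        rw [hk1, wpow_succ]; simp
      rw [this, List.take_left]
    apply enc_inj _ _ (hE i)
    · rw [wpow_length]
      rcases htake_even with ⟨m, hm⟩
      exact ⟨k * m, by rw [hm]; ring⟩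
    · rw [enc_wpow _ htake_even, hencu, ← heq]
  · -- comparability
    intro i j hij r s
    rcases Nat.eq_zero_or_pos t with ht | ht
    · exfalso
      have hci : C i = [] := List.length_eq_zero_iff.mp (by rw [hlen i]; omega)
      have hcj : C j = [] := List.length_eq_zero_iff.mp (by rw [hlen j]; omega)
      have := (hcomp i j hij 0 0).1
      rw [List.rotate_zero, List.rotate_zero, hci, hcj] at this
      exact this List.prefix_rfl
    · apply wcomparable_of_ne
      · rw [List.length_rotate, List.length_rotate, hlenE, hlenE]
      · intro hrot
        have hri : (enc (C i)).rotate r = (enc (C i)).rotate (r % t) := by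
          conv_lhs => rw [← List.rotate_mod]
          rw [hlenE]
        have hrj : (enc (C j)).rotate s = (enc (C j)).rotate (s % t) := by
          conv_lhs => rw [← List.rotate_mod]
          rw [hlenE]
        rw [hri, hrj, hrotE i _ (le_of_lt (Nat.mod_lt r ht)),
          hrotE j _ (le_of_lt (Nat.mod_lt s ht))] at hrot
        have heq := enc_inj _ _ (by rw [List.length_rotate]; exact hE i)
          (by rw [List.length_rotate]; exact hE j) hrot
        have := (hcomp i j hij (2 * (r % t)) (2 * (s % t))).1
        rw [heq] at this
        exact this List.prefix_rfl
  · -- antichain condition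
    rintro ⟨A, hcard, hA⟩
    apply hanti
    set e : Fin N × Fin t → Fin N × Fin (2 * t) :=
      fun p => (p.1, ⟨2 * p.2.val, by have := p.2.isLt; omega⟩) with he
    have heinj : Function.Injective e := by
      rintro ⟨i, r⟩ ⟨j, s⟩ h
      have h1 : i = j := congrArg Prod.fst h
      have h2 : (2 * r.val : ℕ) = 2 * s.val := congrArg (fun p => (p.2 : Fin (2 * t)).val) h
      have h3 : r = s := Fin.ext (by omega)
      rw [h1, h3]
    refine ⟨A.image e, by rw [Finset.card_image_of_injective _ heinj, hcard], ?_⟩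
    intro a ha b hb hab
    obtain ⟨a', ha', rfl⟩ := Finset.mem_image.mp ha
    obtain ⟨b', hb', rfl⟩ := Finset.mem_image.mp hb
    have hab' : a' ≠ b' := fun h => hab (by rw [h])
    have key :
        ¬(List.Lex (· < ·) ((enc (C a'.1)).rotate (a'.2 : ℕ))
            ((enc (C b'.1)).rotate (b'.2 : ℕ)) ∧ a'.1 < b'.1) ∧
        ¬(List.Lex (· < ·) ((enc (C b'.1)).rotate (b'.2 : ℕ))
            ((enc (C a'.1)).rotate (a'.2 : ℕ)) ∧ b'.1 < a'.1) := hA a' ha' b' hb' hab'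
    have hlex : ∀ (p q : Fin N × Fin t),
        (List.Lex (· < ·) ((C (e p).1).rotate ((e p).2 : ℕ)) ((C (e q).1).rotate ((e q).2 : ℕ))
          ↔ List.Lex (· < ·) ((enc (C p.1)).rotate (p.2 : ℕ)) ((enc (C q.1)).rotate (q.2 : ℕ))) := by
      intro p q
      have hp : ((e p).2 : ℕ) = 2 * (p.2 : ℕ) := rfl
      have hq : ((e q).2 : ℕ) = 2 * (q.2 : ℕ) := rfl
      have h1 : (e p).1 = p.1 := rfl
      have h2 : (e q).1 = q.1 := rfl
      rw [hp, hq, h1, h2,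
        hrotE p.1 (p.2 : ℕ) (le_of_lt p.2.isLt),
        hrotE q.1 (q.2 : ℕ) (le_of_lt q.2.isLt),
        enc_lex _ _ (by rw [List.length_rotate, List.length_rotate, hlen, hlen])
          (by rw [List.length_rotate]; exact hE p.1)]
    constructor
    · rintro ⟨hl, hlt⟩
      exact key.1 ⟨(hlex a' b').mp hl, hlt⟩
    · rintro ⟨hl, hlt⟩
      exact key.2 ⟨(hlex b' a').mp hl, hlt⟩

theorem isNLightClass_bddAbove (t l n : ℕ) :
    BddAbove {N | IsNLightClass t l n N} := by
  refine ⟨l ^ t, ?_⟩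
  rintro N ⟨C, hlen, -, hcomp, -⟩
  have hCinj : Function.Injective C := by
    intro i j hij
    by_contra hne
    have := (hcomp i j hne 0 0).1
    rw [List.rotate_zero, List.rotate_zero, hij] at this
    exact this List.prefix_rfl
  have : Function.Injective (fun i : Fin N => fun k : Fin t =>
      (C i).get ⟨k.val, by rw [hlen]; exact k.isLt⟩) := by
    intro i j h
    apply hCinj
    apply List.ext_get (by rw [hlen, hlen])
    intro m h1 h2
    have hm : m < t := by rw [hlen] at h1; exact h1
    exact congrFun h ⟨m, hm⟩
  have hcard := Fintype.card_le_of_injective _ this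
  rwa [Fintype.card_fin, Fintype.card_fun, Fintype.card_fin, Fintype.card_fin] at hcard

/-- The encoding inequality `β(t, l², n) ≥ β(2t, l, n)`. -/
theorem stmt19 (t l n : ℕ) : beta (2 * t) l n ≤ beta t (l ^ 2) n := by
  unfold beta
  rcases Set.eq_empty_or_nonempty {N | IsNLightClass (2 * t) l n N} with h | h
  · rw [h, csSup_empty]
    exact Nat.zero_le _
  · exact csSup_le_csSup (isNLightClass_bddAbove t (l ^ 2) n) h
      (fun N hN => isNLightClass_encode t l n N hN)
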